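/- In the Markov hierarchy setting, if a closed interval B is commensurate with generation n, then B contains at most one left endpoint of generation at most n−1; moreover if B contains a left endpoint of generation k < n−1, that left endpoint must equal the right endpoint of B. -/
import Mathlib


/-- A Markov hierarchy of closed nondegenerate intervals in `[r₁, 1]`, modeling the
basic-interval structure of the induced Manneville–Pomeau map.  A member of
generation `n` is recorded by its pair of endpoints `p = (p.1, p.2)`. -/
structure MarkovHierarchy (r₁ : ℝ) where
  /-- the set of (endpoint pairs of) basic intervals of generation `n` -/
  G : ℕ → Set (ℝ × ℝ)
  nondeg : ∀ n, ∀ p ∈ G n, p.1 < p.2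
  sub : ∀ n, ∀ p ∈ G n, Set.Icc p.1 p.2 ⊆ Set.Icc r₁ 1
  /-- (i) intervals of the same generation have disjoint interiors -/
  disjInt : ∀ n, ∀ p ∈ G n, ∀ q ∈ G n, p ≠ q →
    Set.Ioo p.1 p.2 ∩ Set.Ioo q.1 q.2 = ∅
  /-- basic intervals of distinct generations are nested or have disjoint interiors -/
  nested : ∀ m n, m < n → ∀ p ∈ G m, ∀ q ∈ G n,
    Set.Icc q.1 q.2 ⊆ Set.Icc p.1 p.2 ∨ Set.Ioo p.1 p.2 ∩ Set.Ioo q.1 q.2 = ∅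
  /-- (ii) each interval of generation `n+1` is contained in exactly one interval of
  generation `n` -/
  parent : ∀ n, ∀ p ∈ G (n + 1), ∃! q, q ∈ G n ∧ Set.Icc p.1 p.2 ⊆ Set.Icc q.1 q.2
  /-- (iii) the union of each generation is dense in `[r₁, 1]` -/
  dense_union : ∀ n, Set.Icc r₁ 1 ⊆ closure (⋃ p ∈ G n, Set.Icc p.1 p.2)
  /-- every basic interval has a left-adjacent interval of the same generation -/
  leftAdj : ∀ n, ∀ p ∈ G n, r₁ < p.1 → ∃ q ∈ G n, q.2 = p.1
  /-- every basic interval has a right-adjacent interval of the same generation -/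
  rightAdj : ∀ n, ∀ p ∈ G n, p.2 < 1 → ∃ q ∈ G n, q.1 = p.2
  /-- (iv) just to the right of any left endpoint of generation `n` there lie
  infinitely many intervals of each generation `m > n` -/
  infMany : ∀ n, ∀ p ∈ G n, ∀ ε : ℝ, 0 < ε → ∀ m, n < m →
    {q | q ∈ G m ∧ Set.Icc q.1 q.2 ⊆ Set.Ioo p.1 (p.1 + ε)}.Infinite

/-- The interval `B` is commensurate with generation `n` (`n ≥ 1`): it contains a
member of `Gₙ` but no member of `Gₙ₋₁`. -/
def MarkovHierarchy.cwg {r₁ : ℝ} (H : MarkovHierarchy r₁) (B : Set ℝ) (n : ℕ) : Prop :=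
  (∃ p ∈ H.G n, Set.Icc p.1 p.2 ⊆ B) ∧ ¬∃ p ∈ H.G (n - 1), Set.Icc p.1 p.2 ⊆ B

/-- If a closed interval `B = [a,b]` is commensurate with generation `n`, then `B`
contains at most one left endpoint of generation at most `n-1`; moreover any left
endpoint of generation `k < n-1` contained in `B` equals the right endpoint of `B`. -/
theorem stmt_17 (r₁ : ℝ) (hr₁ : r₁ < 1) (H : MarkovHierarchy r₁)
    (a b : ℝ) (ha : r₁ ≤ a) (hab : a < b) (hb : b ≤ 1)
    (n : ℕ) (hn : 1 ≤ n) (hcwg : H.cwg (Set.Icc a b) n) :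
    {x | x ∈ Set.Icc a b ∧ ∃ m ≤ n - 1, ∃ p ∈ H.G m, p.1 = x}.Subsingleton ∧
    (∀ k, k < n - 1 → ∀ p ∈ H.G k, p.1 ∈ Set.Icc a b → p.1 = b) := by
  obtain ⟨⟨p₀, hp₀, hp₀B⟩, hno⟩ := hcwg
  have key2 : ∀ k, k < n - 1 → ∀ p ∈ H.G k, p.1 ∈ Set.Icc a b → p.1 = b := by
    intro k hk p hp hpB
    by_contra hne
    have h1 : p.1 < b := lt_of_le_of_ne hpB.2 hne
    obtain ⟨q, hq, hqsub⟩ := (H.infMany k p hp (b - p.1) (by linarith) (n-1) hk).nonempty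
    exact hno ⟨q, hq, fun t ht => by
      have h2 := hqsub ht
      simp only [Set.mem_Ioo] at h2
      exact ⟨le_trans hpB.1 h2.1.le, by linarith [h2.2]⟩⟩
  refine ⟨?_, key2⟩
  have key : ∀ x y : ℝ,
      x ∈ {x | x ∈ Set.Icc a b ∧ ∃ m ≤ n - 1, ∃ p ∈ H.G m, p.1 = x} →
      y ∈ {x | x ∈ Set.Icc a b ∧ ∃ m ≤ n - 1, ∃ p ∈ H.G m, p.1 = x} → x < y → False := by
    intro x y hx hy hxy
    obtain ⟨⟨hax, hxb⟩, mx, hmx, p, hp, hpx⟩ := hx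
    obtain ⟨⟨hay, hyb⟩, my, hmy, q, hq, hqy⟩ := hy
    have hxlt : x < b := lt_of_lt_of_le hxy hyb
    rcases lt_or_eq_of_le hmx with hlt | heq
    · exact absurd (key2 mx hlt p hp (by rw [hpx]; exact ⟨hax, hxb⟩))
        (by rw [hpx]; exact ne_of_lt hxlt)
    · rcases le_or_gt p.2 b with hpb | hpb
      · exact hno ⟨p, heq ▸ hp, fun t ht =>
          ⟨le_trans (hpx ▸ hax) ht.1, le_trans ht.2 hpb⟩⟩
      · have hyp2 : y < p.2 := lt_of_le_of_lt hyb hpb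
        have hq12 : q.1 < q.2 := H.nondeg my q hq
        obtain ⟨t, ht1, ht2⟩ : ∃ t, q.1 < t ∧ t < min q.2 p.2 :=
          exists_between (lt_min hq12 (hqy ▸ hyp2))
        have htq : t ∈ Set.Ioo q.1 q.2 := ⟨ht1, lt_of_lt_of_le ht2 (min_le_left _ _)⟩
        have htp : t ∈ Set.Ioo p.1 p.2 :=
          ⟨by rw [hpx]; exact lt_trans hxy (hqy ▸ ht1), lt_of_lt_of_le ht2 (min_le_right _ _)⟩
        rcases lt_or_eq_of_le hmy with hlt' | heq'
        · rcases H.nested my (n-1) hlt' q hq p (heq ▸ hp) with hsub | hdisj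
          · have h3 := (hsub (Set.left_mem_Icc.mpr (H.nondeg (n-1) p (heq ▸ hp)).le)).1
            rw [hqy, hpx] at h3; linarith
          · have h4 : t ∈ Set.Ioo q.1 q.2 ∩ Set.Ioo p.1 p.2 := ⟨htq, htp⟩
            rw [hdisj] at h4; exact h4
        · have hpq : p ≠ q := fun h => by
            rw [h, hqy] at hpx; exact absurd hpx (ne_of_gt hxy)
          have hdisj := H.disjInt (n-1) p (heq ▸ hp) q (heq' ▸ hq) hpq
          have h5 : t ∈ Set.Ioo p.1 p.2 ∩ Set.Ioo q.1 q.2 := ⟨htp, htq⟩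
          rw [hdisj] at h5; exact h5
  intro x hx y hy
  by_contra hne
  rcases lt_trichotomy x y with h | h | h
  · exact key x y hx hy h
  · exact hne h
  · exact key y x hy hx h
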